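/- Let C₁ > 0 and α, s̃ ≥ 0. Define a sequence (C_j)_{j≥1} of positive reals with first term C₁ by C₂ := α·C₁², and for j ≥ 3, C_j := α·Σ_{k+p=j, k,p≥1} C_k C_p + s̃·Σ_{k+p+q=j, k,p,q≥1} C_k C_p C_q. Then there exists ρ > 0 such that C_j ≤ ρ^j for all j ≥ 1. -/
import Mathlib


/-- Exponential growth bound for the recursively defined coefficients of the approximate
solution (a Catalan-type recurrence). -/

lemma sum_inv_sq_aux : ∀ m : ℕ, ∑ k ∈ Finset.Ico 1 (m+2), (1:ℝ)/(k:ℝ)^2 ≤ 2 - 1/((m:ℝ)+1) := by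
  intro m
  induction m with
  | zero => norm_num
  | succ n ih =>
    rw [show n+1+2 = (n+2)+1 by ring, Finset.sum_Ico_succ_top (by omega)]
    have h1 : (0:ℝ) < (n:ℝ)+1 := by positivity
    have h2 : (0:ℝ) < (n:ℝ)+2 := by positivity
    have key : (1:ℝ)/((n+2:ℕ):ℝ)^2 ≤ 1/((n:ℝ)+1) - 1/((n:ℝ)+2) := by
      push_cast
      rw [div_sub_div _ _ (ne_of_gt h1) (ne_of_gt h2)]
      rw [div_le_div_iff₀ (by positivity) (by positivity)]
      ring_nf
      nlinarith
    push_cast at ih key ⊢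
    have e : (1:ℝ)/((n:ℝ)+1+1) = 1/((n:ℝ)+2) := by ring_nf
    rw [e]
    linarith

lemma sum_inv_sq (n : ℕ) : ∑ k ∈ Finset.Ico 1 (n+1), (1:ℝ)/(k:ℝ)^2 ≤ 2 := by
  cases n with
  | zero => simp
  | succ m =>
    have := sum_inv_sq_aux m
    have h : (0:ℝ) < (m:ℝ)+1 := by positivity
    have : (0:ℝ) ≤ 1/((m:ℝ)+1) := by positivity
    calc ∑ k ∈ Finset.Ico 1 (m+2), (1:ℝ)/(k:ℝ)^2 ≤ 2 - 1/((m:ℝ)+1) := sum_inv_sq_aux m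
      _ ≤ 2 := by linarith

lemma term_bound {a b : ℝ} (ha : 1 ≤ a) (hb : 1 ≤ b) :
    1/(a^2*b^2) ≤ 2*(1/a^2 + 1/b^2)/(a+b)^2 := by
  have ha0 : 0 < a := by linarith
  have hb0 : 0 < b := by linarith
  rw [div_le_div_iff₀ (by positivity) (by positivity)]
  have h : 2*(1/a^2+1/b^2)*(a^2*b^2) = 2*(b^2+a^2) := by field_simp
  rw [h]
  nlinarith [sq_nonneg (a-b)]

lemma reflect_sum (j : ℕ) :
    ∑ k ∈ Finset.Ico 1 j, (1:ℝ)/((j-k:ℕ):ℝ)^2 = ∑ k ∈ Finset.Ico 1 j, (1:ℝ)/(k:ℝ)^2 := by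
  refine Finset.sum_nbij' (fun k => j - k) (fun k => j - k) ?_ ?_ ?_ ?_ ?_
  · intro a ha; simp only [Finset.mem_Ico] at *; omega
  · intro a ha; simp only [Finset.mem_Ico] at *; omega
  · intro a ha; simp only [Finset.mem_Ico] at *; omega
  · intro a ha; simp only [Finset.mem_Ico] at *; omega
  · intro a ha; rfl

lemma conv_bound (j : ℕ) (hj : 2 ≤ j) :
    ∑ k ∈ Finset.Ico 1 j, (1:ℝ)/((k:ℝ)^2 * ((j-k:ℕ):ℝ)^2) ≤ 8/(j:ℝ)^2 := by
  have hjpos : (0:ℝ) < (j:ℝ) := by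
    have : 0 < j := by omega
    exact_mod_cast this
  have step1 : ∀ k ∈ Finset.Ico 1 j, (1:ℝ)/((k:ℝ)^2 * ((j-k:ℕ):ℝ)^2) ≤
      2*(1/(k:ℝ)^2 + 1/((j-k:ℕ):ℝ)^2)/(j:ℝ)^2 := by
    intro k hk
    simp only [Finset.mem_Ico] at hk
    have hk1 : (1:ℝ) ≤ (k:ℝ) := by exact_mod_cast hk.1
    have hjk1 : (1:ℝ) ≤ ((j-k:ℕ):ℝ) := by
      have : 1 ≤ j - k := by omega
      exact_mod_cast this
    have hsum : (k:ℝ) + ((j-k:ℕ):ℝ) = (j:ℝ) := by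
      have hkj : k ≤ j := by omega
      rw [Nat.cast_sub hkj]; ring
    have := term_bound hk1 hjk1
    rwa [hsum] at this
  have split : ∑ k ∈ Finset.Ico 1 j, 2*(1/(k:ℝ)^2 + 1/((j-k:ℕ):ℝ)^2)/(j:ℝ)^2
      = 2/(j:ℝ)^2 * (∑ k ∈ Finset.Ico 1 j, (1:ℝ)/(k:ℝ)^2)
        + 2/(j:ℝ)^2 * (∑ k ∈ Finset.Ico 1 j, (1:ℝ)/((j-k:ℕ):ℝ)^2) := by
    rw [Finset.mul_sum, Finset.mul_sum, ← Finset.sum_add_distrib]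
    apply Finset.sum_congr rfl; intro k _; ring
  obtain ⟨m, rfl⟩ : ∃ m, j = m + 1 := ⟨j - 1, by omega⟩
  have hs1 : ∑ k ∈ Finset.Ico 1 (m+1), (1:ℝ)/(k:ℝ)^2 ≤ 2 := sum_inv_sq m
  have hs2 : ∑ k ∈ Finset.Ico 1 (m+1), (1:ℝ)/((m+1-k:ℕ):ℝ)^2 ≤ 2 := by
    rw [reflect_sum]; exact hs1
  calc ∑ k ∈ Finset.Ico 1 (m+1), (1:ℝ)/((k:ℝ)^2 * ((m+1-k:ℕ):ℝ)^2)
      ≤ ∑ k ∈ Finset.Ico 1 (m+1), 2*(1/(k:ℝ)^2 + 1/((m+1-k:ℕ):ℝ)^2)/((m+1:ℕ):ℝ)^2 :=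
        Finset.sum_le_sum step1
    _ = 2/((m+1:ℕ):ℝ)^2 * (∑ k ∈ Finset.Ico 1 (m+1), (1:ℝ)/(k:ℝ)^2)
        + 2/((m+1:ℕ):ℝ)^2 * (∑ k ∈ Finset.Ico 1 (m+1), (1:ℝ)/((m+1-k:ℕ):ℝ)^2) := split
    _ ≤ 2/((m+1:ℕ):ℝ)^2 * 2 + 2/((m+1:ℕ):ℝ)^2 * 2 := by
        have h2 : (0:ℝ) ≤ 2/((m+1:ℕ):ℝ)^2 := by positivity
        gcongr
    _ = 8/((m+1:ℕ):ℝ)^2 := by ring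

lemma conv3_bound (j : ℕ) (hj : 2 ≤ j) :
    ∑ k ∈ Finset.Ico 1 j, (1/(k:ℝ)^2) *
      (∑ p ∈ Finset.Ico 1 (j-k), (1:ℝ)/((p:ℝ)^2 * ((j-k-p:ℕ):ℝ)^2)) ≤ 64/(j:ℝ)^2 := by
  have inner : ∀ k ∈ Finset.Ico 1 j,
      (1/(k:ℝ)^2) * (∑ p ∈ Finset.Ico 1 (j-k), (1:ℝ)/((p:ℝ)^2 * ((j-k-p:ℕ):ℝ)^2))
        ≤ (1/(k:ℝ)^2) * (8/((j-k:ℕ):ℝ)^2) := by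
    intro k hk
    simp only [Finset.mem_Ico] at hk
    apply mul_le_mul_of_nonneg_left _ (by positivity)
    rcases le_or_gt 2 (j - k) with h | h
    · exact conv_bound (j-k) h
    · have hjk : j - k = 1 := by omega
      rw [hjk]
      norm_num
  calc ∑ k ∈ Finset.Ico 1 j, (1/(k:ℝ)^2) *
        (∑ p ∈ Finset.Ico 1 (j-k), (1:ℝ)/((p:ℝ)^2 * ((j-k-p:ℕ):ℝ)^2))
      ≤ ∑ k ∈ Finset.Ico 1 j, (1/(k:ℝ)^2) * (8/((j-k:ℕ):ℝ)^2) := Finset.sum_le_sum inner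
    _ = 8 * ∑ k ∈ Finset.Ico 1 j, (1:ℝ)/((k:ℝ)^2 * ((j-k:ℕ):ℝ)^2) := by
        rw [Finset.mul_sum]; apply Finset.sum_congr rfl; intro k _; ring
    _ ≤ 8 * (8/(j:ℝ)^2) := mul_le_mul_of_nonneg_left (conv_bound j hj) (by norm_num)
    _ = 64/(j:ℝ)^2 := by ring

theorem coefficients_exponential_bound (C1 α st : ℝ) (hC1 : 0 < C1) (hα : 0 ≤ α)
    (hst : 0 ≤ st) (C : ℕ → ℝ)
    (hpos : ∀ j : ℕ, 1 ≤ j → 0 < C j)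
    (h1 : C 1 = C1)
    (h2 : C 2 = α * C1 ^ 2)
    (hrec : ∀ j : ℕ, 3 ≤ j →
      C j = α * ∑ k ∈ Finset.Ico 1 j, C k * C (j - k)
        + st * ∑ k ∈ Finset.Ico 1 j, ∑ p ∈ Finset.Ico 1 (j - k), C k * C p * C (j - k - p)) :
    ∃ ρ > (0 : ℝ), ∀ j : ℕ, 1 ≤ j → C j ≤ ρ ^ j := by
  obtain ⟨A, hA0, hA1, hAkey⟩ : ∃ A : ℝ, 0 < A ∧ A ≤ 1 ∧ 8*α*A + 64*st*A^2 ≤ 1 := by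
    refine ⟨min 1 (1/(8*α+64*st+1)), lt_min one_pos (by positivity), min_le_left _ _, ?_⟩
    set A := min 1 (1/(8*α+64*st+1)) with hAdef
    have hA0 : 0 < A := lt_min one_pos (by positivity)
    have hA1 : A ≤ 1 := min_le_left _ _
    have hAB : A ≤ 1/(8*α+64*st+1) := min_le_right _ _
    have hBpos : (0:ℝ) < 8*α+64*st+1 := by positivity
    have h3 : (8*α+64*st)*A ≤ (8*α+64*st)*(1/(8*α+64*st+1)) :=
      mul_le_mul_of_nonneg_left hAB (by positivity)
    have h4 : (8*α+64*st)*(1/(8*α+64*st+1)) ≤ 1 := by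
      rw [mul_one_div, div_le_one hBpos]; linarith
    have h5 : A^2 ≤ A := by nlinarith
    nlinarith [mul_le_mul_of_nonneg_left h5 hst]
  obtain ⟨ρ, hρ1, hρC1, hρC2⟩ : ∃ ρ : ℝ, 1 ≤ ρ ∧ C1 ≤ A*ρ ∧ 4*α*C1^2 ≤ A*ρ^2 := by
    refine ⟨max 1 ((C1 + 4*α*C1^2 + 1)/A), le_max_left _ _, ?_, ?_⟩
    · have h := le_max_right 1 ((C1 + 4*α*C1^2 + 1)/A)
      have h2' := mul_le_mul_of_nonneg_left h hA0.le
      rw [mul_div_cancel₀ _ (ne_of_gt hA0)] at h2'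
      nlinarith [mul_nonneg hα (sq_nonneg C1)]
    · have h := le_max_right 1 ((C1 + 4*α*C1^2 + 1)/A)
      have hρ1 : (1:ℝ) ≤ max 1 ((C1 + 4*α*C1^2 + 1)/A) := le_max_left _ _
      have h2' := mul_le_mul_of_nonneg_left h hA0.le
      rw [mul_div_cancel₀ _ (ne_of_gt hA0)] at h2'
      have hm0 : (0:ℝ) ≤ 1 ⊔ ((C1 + 4*α*C1^2 + 1)/A) := by
        have := le_max_left (1:ℝ) ((C1 + 4*α*C1^2 + 1)/A); linarith
      have hm1 : (0:ℝ) ≤ (1 ⊔ ((C1 + 4*α*C1^2 + 1)/A)) - 1 := by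
        have := le_max_left (1:ℝ) ((C1 + 4*α*C1^2 + 1)/A); linarith
      nlinarith [mul_nonneg (mul_nonneg hA0.le hm0) hm1]
  have hρ0 : (0:ℝ) < ρ := lt_of_lt_of_le one_pos hρ1
  have key : ∀ j : ℕ, 1 ≤ j → C j ≤ A * ρ^j / (j:ℝ)^2 := by
    intro j
    induction j using Nat.strong_induction_on with
    | _ j ih =>
    intro hj
    rcases lt_or_ge j 3 with hj3 | hj3
    · interval_cases j
      · simpa [h1] using hρC1
      · rw [h2]
        have : ((2:ℕ):ℝ)^2 = 4 := by norm_num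
        rw [this, le_div_iff₀ (by norm_num)]
        linarith
    · rw [hrec j hj3]
      have hjR : (0:ℝ) < (j:ℝ) := by
        have : 0 < j := by omega
        exact_mod_cast this
      have hρj : (0:ℝ) ≤ ρ^j := pow_nonneg hρ0.le j
      -- double sum
      have hdouble : ∑ k ∈ Finset.Ico 1 j, C k * C (j-k)
          ≤ A^2 * ρ^j * (8/(j:ℝ)^2) := by
        have hterm : ∀ k ∈ Finset.Ico 1 j,
            C k * C (j-k) ≤ A^2*ρ^j * ((1:ℝ)/((k:ℝ)^2 * ((j-k:ℕ):ℝ)^2)) := by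
          intro k hk
          simp only [Finset.mem_Ico] at hk
          have hjk1 : 1 ≤ j - k := by omega
          have hb1 := ih k hk.2 hk.1
          have hb2 := ih (j-k) (by omega) hjk1
          have hnn1 : (0:ℝ) ≤ A * ρ^k / (k:ℝ)^2 :=
            div_nonneg (mul_nonneg hA0.le (pow_nonneg hρ0.le k)) (sq_nonneg _)
          have hmul := mul_le_mul hb1 hb2 (hpos (j-k) hjk1).le hnn1
          have hpow : ρ^k * ρ^(j-k) = ρ^j := by
            rw [← pow_add]; congr 1; omega
          calc C k * C (j-k) ≤ (A*ρ^k/(k:ℝ)^2) * (A*ρ^(j-k)/((j-k:ℕ):ℝ)^2) := hmul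
            _ = A^2*(ρ^k*ρ^(j-k)) * ((1:ℝ)/((k:ℝ)^2 * ((j-k:ℕ):ℝ)^2)) := by ring
            _ = A^2*ρ^j * ((1:ℝ)/((k:ℝ)^2 * ((j-k:ℕ):ℝ)^2)) := by rw [hpow]
        calc ∑ k ∈ Finset.Ico 1 j, C k * C (j-k)
            ≤ ∑ k ∈ Finset.Ico 1 j, A^2*ρ^j * ((1:ℝ)/((k:ℝ)^2 * ((j-k:ℕ):ℝ)^2)) :=
              Finset.sum_le_sum hterm
          _ = A^2*ρ^j * ∑ k ∈ Finset.Ico 1 j, (1:ℝ)/((k:ℝ)^2 * ((j-k:ℕ):ℝ)^2) := by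
              rw [← Finset.mul_sum]
          _ ≤ A^2*ρ^j * (8/(j:ℝ)^2) :=
              mul_le_mul_of_nonneg_left (conv_bound j (by omega))
                (mul_nonneg (pow_nonneg hA0.le 2) hρj)
      -- triple sum
      have htriple : ∑ k ∈ Finset.Ico 1 j, ∑ p ∈ Finset.Ico 1 (j-k), C k * C p * C (j-k-p)
          ≤ A^3 * ρ^j * (64/(j:ℝ)^2) := by
        have houter : ∀ k ∈ Finset.Ico 1 j,
            ∑ p ∈ Finset.Ico 1 (j-k), C k * C p * C (j-k-p)
              ≤ A^3*ρ^j * ((1/(k:ℝ)^2) *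
                  ∑ p ∈ Finset.Ico 1 (j-k), (1:ℝ)/((p:ℝ)^2 * ((j-k-p:ℕ):ℝ)^2)) := by
          intro k hk
          simp only [Finset.mem_Ico] at hk
          rw [Finset.mul_sum, Finset.mul_sum]
          apply Finset.sum_le_sum
          intro p hp
          simp only [Finset.mem_Ico] at hp
          have hq1 : 1 ≤ j - k - p := by omega
          have hbk := ih k hk.2 hk.1
          have hbp := ih p (by omega) hp.1
          have hbq := ih (j-k-p) (by omega) hq1
          have hnnk : (0:ℝ) ≤ A * ρ^k / (k:ℝ)^2 :=
            div_nonneg (mul_nonneg hA0.le (pow_nonneg hρ0.le k)) (sq_nonneg _)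
          have hnnp : (0:ℝ) ≤ A * ρ^p / (p:ℝ)^2 :=
            div_nonneg (mul_nonneg hA0.le (pow_nonneg hρ0.le p)) (sq_nonneg _)
          have hmul := mul_le_mul
            (mul_le_mul hbk hbp (hpos p hp.1).le hnnk)
            hbq (hpos (j-k-p) hq1).le (mul_nonneg hnnk hnnp)
          have hpow : ρ^k * ρ^p * ρ^(j-k-p) = ρ^j := by
            rw [← pow_add, ← pow_add]; congr 1; omega
          calc C k * C p * C (j-k-p)
              ≤ (A*ρ^k/(k:ℝ)^2) * (A*ρ^p/(p:ℝ)^2) * (A*ρ^(j-k-p)/((j-k-p:ℕ):ℝ)^2) := hmul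
            _ = A^3*(ρ^k*ρ^p*ρ^(j-k-p)) *
                ((1/(k:ℝ)^2) * ((1:ℝ)/((p:ℝ)^2 * ((j-k-p:ℕ):ℝ)^2))) := by ring
            _ = A^3*ρ^j * ((1/(k:ℝ)^2) * ((1:ℝ)/((p:ℝ)^2 * ((j-k-p:ℕ):ℝ)^2))) := by rw [hpow]
        calc ∑ k ∈ Finset.Ico 1 j, ∑ p ∈ Finset.Ico 1 (j-k), C k * C p * C (j-k-p)
            ≤ ∑ k ∈ Finset.Ico 1 j, A^3*ρ^j * ((1/(k:ℝ)^2) *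
                ∑ p ∈ Finset.Ico 1 (j-k), (1:ℝ)/((p:ℝ)^2 * ((j-k-p:ℕ):ℝ)^2)) :=
              Finset.sum_le_sum houter
          _ = A^3*ρ^j * ∑ k ∈ Finset.Ico 1 j, ((1/(k:ℝ)^2) *
                ∑ p ∈ Finset.Ico 1 (j-k), (1:ℝ)/((p:ℝ)^2 * ((j-k-p:ℕ):ℝ)^2)) := by
              rw [← Finset.mul_sum]
          _ ≤ A^3*ρ^j * (64/(j:ℝ)^2) :=
              mul_le_mul_of_nonneg_left (conv3_bound j (by omega))
                (mul_nonneg (pow_nonneg hA0.le 3) hρj)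
      have hnnX : (0:ℝ) ≤ A*ρ^j/(j:ℝ)^2 :=
        div_nonneg (mul_nonneg hA0.le hρj) (sq_nonneg _)
      calc α * ∑ k ∈ Finset.Ico 1 j, C k * C (j-k)
            + st * ∑ k ∈ Finset.Ico 1 j, ∑ p ∈ Finset.Ico 1 (j-k), C k * C p * C (j-k-p)
          ≤ α * (A^2*ρ^j*(8/(j:ℝ)^2)) + st * (A^3*ρ^j*(64/(j:ℝ)^2)) :=
            add_le_add (mul_le_mul_of_nonneg_left hdouble hα)
              (mul_le_mul_of_nonneg_left htriple hst)
        _ = (8*α*A + 64*st*A^2) * (A*ρ^j/(j:ℝ)^2) := by ring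
        _ ≤ 1 * (A*ρ^j/(j:ℝ)^2) := mul_le_mul_of_nonneg_right hAkey hnnX
        _ = A*ρ^j/(j:ℝ)^2 := one_mul _
  refine ⟨ρ, hρ0, fun j hj => ?_⟩
  have hkey := key j hj
  have hjR : (1:ℝ) ≤ (j:ℝ) := by exact_mod_cast hj
  have hρj : (0:ℝ) ≤ ρ^j := pow_nonneg hρ0.le j
  have hj2 : (1:ℝ) ≤ (j:ℝ)^2 := by nlinarith
  calc C j ≤ A*ρ^j/(j:ℝ)^2 := hkey
    _ ≤ ρ^j := by
        rw [div_le_iff₀ (by positivity)]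
        nlinarith [mul_le_mul_of_nonneg_right hA1 hρj]
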